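/- Let Z and Z' be defined as double series Z = ∑_{n≥0} (z̊^n/n!) ∑_{m≥0} (ż^m/m!) I(n,m) and Z' = ∑_{n≥0} (z̊^n/n!) ∑_{m≥0} (ż^m/m!) I'(n,m) with 0 ≤ I(n,m) ≤ I'(n,m) for all n, m and all quantities finite. If moreover I'(n,m) − I(n,m) ≤ n·c₁·I'(n−1,m) + m·c₂·I'(n,m−1) for constants c₁, c₂ ≥ 0 (with the convention I'(−1,m) = I'(n,−1) = 0), then Z' − Z ≤ Z'·(z̊ c₁ + ż c₂). -/

import Mathlib

/-- Comparison of two Poissonian double series: if `0 ≤ I ≤ I'` and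
`I'(n,m) − I(n,m) ≤ n c₁ I'(n−1,m) + m c₂ I'(n,m−1)`, then `Z' − Z ≤ Z'(z̊c₁ + zpc₂)`. -/
theorem stmt12 (z zp c₁ c₂ : ℝ) (hz : 0 < z) (hzp : 0 < zp) (hc₁ : 0 ≤ c₁) (hc₂ : 0 ≤ c₂)
    (I I' : ℕ → ℕ → ℝ) (hI0 : ∀ n m, 0 ≤ I n m) (hII' : ∀ n m, I n m ≤ I' n m)
    (hrec : ∀ n m, I' n m - I n m ≤
      (n : ℝ) * c₁ * I' (n - 1) m + (m : ℝ) * c₂ * I' n (m - 1))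
    (hsum' : Summable (fun p : ℕ × ℕ =>
      z ^ p.1 / p.1.factorial * (zp ^ p.2 / p.2.factorial) * I' p.1 p.2))
    (hsum : Summable (fun p : ℕ × ℕ =>
      z ^ p.1 / p.1.factorial * (zp ^ p.2 / p.2.factorial) * I p.1 p.2)) :
    (∑' p : ℕ × ℕ, z ^ p.1 / p.1.factorial * (zp ^ p.2 / p.2.factorial) * I' p.1 p.2) -
      (∑' p : ℕ × ℕ, z ^ p.1 / p.1.factorial * (zp ^ p.2 / p.2.factorial) * I p.1 p.2) ≤
    (∑' p : ℕ × ℕ, z ^ p.1 / p.1.factorial * (zp ^ p.2 / p.2.factorial) * I' p.1 p.2) *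
      (z * c₁ + zp * c₂) := by
  set w : ℕ × ℕ → ℝ := fun p => z ^ p.1 / p.1.factorial * (zp ^ p.2 / p.2.factorial) with hw
  have hw0 : ∀ p : ℕ × ℕ, 0 ≤ w p := fun p => by
    have := hz.le; have := hzp.le; positivity
  set g₁ : ℕ × ℕ → ℝ := fun p => w p * ((p.1 : ℝ) * c₁ * I' (p.1 - 1) p.2) with hg₁
  set g₂ : ℕ × ℕ → ℝ := fun p => w p * ((p.2 : ℝ) * c₂ * I' p.1 (p.2 - 1)) with hg₂
  set i₁ : ℕ × ℕ → ℕ × ℕ := fun p => (p.1 + 1, p.2) with hi₁def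
  set i₂ : ℕ × ℕ → ℕ × ℕ := fun p => (p.1, p.2 + 1) with hi₂def
  have hi₁ : Function.Injective i₁ := by
    intro a b h; simpa [i₁, Prod.ext_iff] using h
  have hi₂ : Function.Injective i₂ := by
    intro a b h; simpa [i₂, Prod.ext_iff] using h
  have hcomp₁ : ∀ p : ℕ × ℕ, g₁ (i₁ p) = z * c₁ * (w p * I' p.1 p.2) := by
    intro p
    have hfac : ((p.1 + 1).factorial : ℝ) = (p.1 + 1) * p.1.factorial := by
      rw [Nat.factorial_succ]; push_cast; ring
    have h1 : (p.1.factorial : ℝ) ≠ 0 := Nat.cast_ne_zero.mpr p.1.factorial_ne_zero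
    have h2 : ((p.1 : ℝ) + 1) ≠ 0 := by positivity
    simp only [g₁, i₁, w]
    push_cast [hfac]
    field_simp
    ring
  have hcomp₂ : ∀ p : ℕ × ℕ, g₂ (i₂ p) = zp * c₂ * (w p * I' p.1 p.2) := by
    intro p
    have hfac : ((p.2 + 1).factorial : ℝ) = (p.2 + 1) * p.2.factorial := by
      rw [Nat.factorial_succ]; push_cast; ring
    have h1 : (p.2.factorial : ℝ) ≠ 0 := Nat.cast_ne_zero.mpr p.2.factorial_ne_zero
    have h2 : ((p.2 : ℝ) + 1) ≠ 0 := by positivity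
    simp only [g₂, i₂, w]
    push_cast [hfac]
    field_simp
    ring
  have hsupp₁ : Function.support g₁ ⊆ Set.range i₁ := by
    intro p hp
    rcases Nat.eq_zero_or_pos p.1 with h0 | h0
    · exfalso; apply hp; simp [g₁, h0]
    · exact ⟨(p.1 - 1, p.2), by simp [i₁, Prod.ext_iff, Nat.succ_pred_eq_of_pos h0, Nat.sub_add_cancel h0]⟩
  have hsupp₂ : Function.support g₂ ⊆ Set.range i₂ := by
    intro p hp
    rcases Nat.eq_zero_or_pos p.2 with h0 | h0
    · exfalso; apply hp; simp [g₂, h0]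
    · exact ⟨(p.1, p.2 - 1), by simp [i₂, Prod.ext_iff, Nat.succ_pred_eq_of_pos h0, Nat.sub_add_cancel h0]⟩
  have hsg₁c : Summable (fun p : ℕ × ℕ => g₁ (i₁ p)) := by
    have := hsum'.mul_left (z * c₁)
    exact this.congr fun p => (hcomp₁ p).symm
  have hsg₂c : Summable (fun p : ℕ × ℕ => g₂ (i₂ p)) := by
    have := hsum'.mul_left (zp * c₂)
    exact this.congr fun p => (hcomp₂ p).symm
  have hz₁ : ∀ x ∉ Set.range i₁, g₁ x = 0 := fun x hx => by
    by_contra h; exact hx (hsupp₁ h)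
  have hz₂ : ∀ x ∉ Set.range i₂, g₂ x = 0 := fun x hx => by
    by_contra h; exact hx (hsupp₂ h)
  have hsg₁ : Summable g₁ := (hi₁.summable_iff hz₁).mp hsg₁c
  have hsg₂ : Summable g₂ := (hi₂.summable_iff hz₂).mp hsg₂c
  have ht₁ : ∑' p, g₁ p = z * c₁ *
      ∑' p : ℕ × ℕ, w p * I' p.1 p.2 := by
    rw [← hi₁.tsum_eq hsupp₁]
    rw [show (fun p : ℕ × ℕ => g₁ (i₁ p)) = fun p => z * c₁ * (w p * I' p.1 p.2) from
      funext hcomp₁]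
    exact tsum_mul_left
  have ht₂ : ∑' p, g₂ p = zp * c₂ *
      ∑' p : ℕ × ℕ, w p * I' p.1 p.2 := by
    rw [← hi₂.tsum_eq hsupp₂]
    rw [show (fun p : ℕ × ℕ => g₂ (i₂ p)) = fun p => zp * c₂ * (w p * I' p.1 p.2) from
      funext hcomp₂]
    exact tsum_mul_left
  have hdiff : (∑' p : ℕ × ℕ, w p * I' p.1 p.2) - (∑' p : ℕ × ℕ, w p * I p.1 p.2)
      = ∑' p : ℕ × ℕ, (w p * I' p.1 p.2 - w p * I p.1 p.2) := (Summable.tsum_sub hsum' hsum).symm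
  rw [hdiff]
  have hle : ∑' p : ℕ × ℕ, (w p * I' p.1 p.2 - w p * I p.1 p.2) ≤ ∑' p, (g₁ p + g₂ p) := by
    apply Summable.tsum_le_tsum _ (hsum'.sub hsum) (hsg₁.add hsg₂)
    intro p
    have := hrec p.1 p.2
    have h := mul_le_mul_of_nonneg_left this (hw0 p)
    calc w p * I' p.1 p.2 - w p * I p.1 p.2 = w p * (I' p.1 p.2 - I p.1 p.2) := by ring
      _ ≤ w p * ((p.1 : ℝ) * c₁ * I' (p.1 - 1) p.2 + (p.2 : ℝ) * c₂ * I' p.1 (p.2 - 1)) := h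
      _ = g₁ p + g₂ p := by simp only [g₁, g₂]; ring
  refine hle.trans ?_
  rw [Summable.tsum_add hsg₁ hsg₂, ht₁, ht₂]
  ring_nf
  exact le_of_eq (by simp only [w]; ring_nf; simp only [mul_comm, mul_assoc, mul_left_comm])
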